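/- There exists a universal constant C > 0 with the following property. For all signs s₁, s₂ ∈ {+1, −1}, all k₁, k₂ ∈ ℕ, all integers l with 1 ≤ l ≤ min(k₁, k₂) + 10, all unit vectors ω₁, ω₂ ∈ ℝ² with |s₁ω₁ − s₂ω₂| ≤ 2^{−l+2}, and all vectors v₁, v₂ ∈ ℂ², one has |⟨Π_{s₁}(2^{k₁}ω₁)v₁, γ⁰·Π_{s₂}(2^{k₂}ω₂)v₂⟩_{ℂ²}| ≤ C·2^{−l}·|v₁|·|v₂|, where ⟨·,·⟩_{ℂ²} is the Hermitian inner product on ℂ². -/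

import Mathlib

noncomputable section

/-- ℝ² as a Euclidean space. -/
abbrev E2 := EuclideanSpace ℝ (Fin 2)

/-- The Japanese bracket `⟨ξ⟩_M = √(M² + |ξ|²)`. -/
def jb (M : ℝ) (ξ : E2) : ℝ := Real.sqrt (M ^ 2 + ‖ξ‖ ^ 2)

/-- The Pauli matrix σ¹. -/
def σ1 : Matrix (Fin 2) (Fin 2) ℂ := !![0, 1; 1, 0]

/-- The Pauli matrix σ². -/
def σ2 : Matrix (Fin 2) (Fin 2) ℂ := !![0, -Complex.I; Complex.I, 0]

/-- The Dirac matrix γ⁰. -/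
def γ0 : Matrix (Fin 2) (Fin 2) ℂ := !![1, 0; 0, -1]

/-- The projection `Π^M_s(ξ) = (1/2)[I + s·⟨ξ⟩_M⁻¹(ξ₁σ¹ + ξ₂σ² + Mγ⁰)]`, `s = ±1`. -/
def PiM (M s : ℝ) (ξ : E2) : Matrix (Fin 2) (Fin 2) ℂ :=
  (2 : ℂ)⁻¹ • (1 + ((s / jb M ξ : ℝ) : ℂ) •
    (((ξ 0 : ℝ) : ℂ) • σ1 + ((ξ 1 : ℝ) : ℂ) • σ2 + ((M : ℝ) : ℂ) • γ0))

/-- The operator norm on ℂ² of a 2×2 complex matrix. -/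
def opNorm (A : Matrix (Fin 2) (Fin 2) ℂ) : ℝ := ‖Matrix.toEuclideanCLM (𝕜 := ℂ) A‖

/-- A 2×2 complex matrix acting on ℂ². -/
def matApp (A : Matrix (Fin 2) (Fin 2) ℂ) (v : EuclideanSpace ℂ (Fin 2)) :
    EuclideanSpace ℂ (Fin 2) := Matrix.toEuclideanCLM (𝕜 := ℂ) A v

open Matrix

lemma matApp_apply (A : Matrix (Fin 2) (Fin 2) ℂ) (v : EuclideanSpace ℂ (Fin 2)) (i : Fin 2) :
    matApp A v i = ∑ j, A i j * v j := by
  have h := Matrix.ofLp_toEuclideanCLM (𝕜 := ℂ) (n := Fin 2) A v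
  have h2 : matApp A v i = WithLp.ofLp (matApp A v) i := rfl
  rw [h2, matApp, h]
  simp [Matrix.mulVec, dotProduct]

lemma matApp_mul (A B : Matrix (Fin 2) (Fin 2) ℂ) (v : EuclideanSpace ℂ (Fin 2)) :
    matApp (A * B) v = matApp A (matApp B v) := by
  simp [matApp, _root_.map_mul]

lemma inner_matApp (X Z : Matrix (Fin 2) (Fin 2) ℂ) (v w : EuclideanSpace ℂ (Fin 2)) :
    (inner ℂ (matApp X v) (matApp Z w) : ℂ) =
      ∑ j, ∑ k, (starRingEnd ℂ) (v j) * ((Xᴴ * Z) j k * w k) := by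
  rw [PiLp.inner_apply]
  simp only [RCLike.inner_apply, matApp_apply, Matrix.mul_apply, Matrix.conjTranspose_apply,
    Fin.sum_univ_two, map_add, _root_.map_mul, RCLike.star_def]
  ring

lemma coord_le (v : EuclideanSpace ℂ (Fin 2)) (i : Fin 2) : ‖v i‖ ≤ ‖v‖ := by
  rw [EuclideanSpace.norm_eq]
  rw [show ‖v i‖ = Real.sqrt (‖v i‖^2) from (Real.sqrt_sq (norm_nonneg _)).symm]
  apply Real.sqrt_le_sqrt
  rw [Fin.sum_univ_two]
  fin_cases i <;> simp

def Pm (x y z : ℝ) : Matrix (Fin 2) (Fin 2) ℂ :=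
  (2:ℂ)⁻¹ • !![1 + (z:ℂ), (x:ℂ) - (y:ℂ)*Complex.I; (x:ℂ) + (y:ℂ)*Complex.I, 1 - (z:ℂ)]

lemma PiM_eq (s : ℝ) (ξ : E2) :
    PiM 1 s ξ = Pm (s * ξ 0 / jb 1 ξ) (s * ξ 1 / jb 1 ξ) (s / jb 1 ξ) := by
  unfold PiM Pm σ1 σ2 γ0
  ext i j
  fin_cases i <;> fin_cases j <;>
    simp [Matrix.add_apply, Matrix.smul_apply, Matrix.one_apply] <;> push_cast <;> ring

lemma Pm_herm (x y z : ℝ) : (Pm x y z)ᴴ = Pm x y z := by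
  unfold Pm
  ext i j
  fin_cases i <;> fin_cases j <;>
    simp [Matrix.conjTranspose_apply, Matrix.smul_apply] <;> push_cast <;> ring

lemma Pm_prod (p₁ p₂ p₃ q₁ q₂ q₃ : ℝ) :
    (Pm p₁ p₂ p₃)ᴴ * (γ0 * Pm q₁ q₂ q₃) = (4:ℂ)⁻¹ • !![
      ((1 + (p₃*q₃-p₁*q₁-p₂*q₂) + p₃ + q₃ : ℝ) : ℂ) + ((p₂*q₁ - p₁*q₂ : ℝ) : ℂ) * Complex.I,
      ((q₁ - p₁ + p₃*q₁ + p₁*q₃ : ℝ) : ℂ) + ((p₂ - q₂ - p₃*q₂ - p₂*q₃ : ℝ) : ℂ) * Complex.I;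
      ((p₁ - q₁ + p₁*q₃ + p₃*q₁ : ℝ) : ℂ) + ((p₂ + p₂*q₃ - q₂ + p₃*q₂ : ℝ) : ℂ) * Complex.I,
      ((-(1 + (p₃*q₃-p₁*q₁-p₂*q₂)) + p₃ + q₃ : ℝ) : ℂ) + ((p₂*q₁ - p₁*q₂ : ℝ) : ℂ) * Complex.I] := by
  rw [Pm_herm]
  unfold Pm γ0
  ext i j
  fin_cases i <;> fin_cases j
  · simp [Matrix.mul_apply, Fin.sum_univ_two, Matrix.smul_apply]
    linear_combination ((p₂*q₂ : ℂ)/4) * Complex.I_sq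
  · simp [Matrix.mul_apply, Fin.sum_univ_two, Matrix.smul_apply]
    ring
  · simp [Matrix.mul_apply, Fin.sum_univ_two, Matrix.smul_apply]
    ring
  · simp [Matrix.mul_apply, Fin.sum_univ_two, Matrix.smul_apply]
    linear_combination (-(p₂*q₂ : ℂ)/4) * Complex.I_sq

lemma norm_mk_le (x y : ℝ) : ‖((x:ℂ) + (y:ℂ) * Complex.I)‖ ≤ |x| + |y| := by
  have h := Complex.norm_le_abs_re_add_abs_im ((x:ℂ) + (y:ℂ) * Complex.I)
  simpa using h

lemma abs_le_of_sq (x g : ℝ) (hg : 0 ≤ g) (h : x^2 ≤ g^2) : |x| ≤ g := by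
  rw [abs_le]
  constructor <;> nlinarith [sq_nonneg (x+g), sq_nonneg (x-g)]

lemma abs_mul_le (x y g : ℝ) (hx : |x| ≤ 1) (hy : |y| ≤ g) : |x*y| ≤ g := by
  rw [abs_mul]
  nlinarith [abs_nonneg x, abs_nonneg y]

lemma norm_quarter (X Y bX bY : ℝ) (hX : |X| ≤ bX) (hY : |Y| ≤ bY) :
    ‖(4:ℂ)⁻¹ • ((X:ℂ) + (Y:ℂ)*Complex.I)‖ ≤ (bX + bY)/4 := by
  rw [norm_smul]
  have h4 : ‖(4:ℂ)⁻¹‖ = 4⁻¹ := by simp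
  rw [h4]
  have h := norm_mk_le X Y
  linarith

lemma entries_bound (p₁ p₂ p₃ q₁ q₂ q₃ g : ℝ)
    (hp : p₁^2+p₂^2+p₃^2 = 1) (hq : q₁^2+q₂^2+q₃^2 = 1) (hg : 0 ≤ g)
    (hd : 2 + 2*(p₃*q₃ - p₁*q₁ - p₂*q₂) ≤ g^2) :
    ∀ i j, ‖((Pm p₁ p₂ p₃)ᴴ * (γ0 * Pm q₁ q₂ q₃)) i j‖ ≤ g^2 + 2*g := by
  have hsq : (q₁-p₁)^2 + (q₂-p₂)^2 + (p₃+q₃)^2 ≤ g^2 := by nlinarith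
  have e1 : |q₁ - p₁| ≤ g := abs_le_of_sq _ _ hg (by nlinarith [sq_nonneg (q₂-p₂), sq_nonneg (p₃+q₃)])
  have e2 : |q₂ - p₂| ≤ g := abs_le_of_sq _ _ hg (by nlinarith [sq_nonneg (q₁-p₁), sq_nonneg (p₃+q₃)])
  have e3 : |p₃ + q₃| ≤ g := abs_le_of_sq _ _ hg (by nlinarith [sq_nonneg (q₁-p₁), sq_nonneg (q₂-p₂)])
  have a1 : |p₁| ≤ 1 := abs_le_of_sq _ _ zero_le_one (by nlinarith [sq_nonneg p₂, sq_nonneg p₃])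
  have a2 : |p₂| ≤ 1 := abs_le_of_sq _ _ zero_le_one (by nlinarith [sq_nonneg p₁, sq_nonneg p₃])
  have a3 : |p₃| ≤ 1 := abs_le_of_sq _ _ zero_le_one (by nlinarith [sq_nonneg p₁, sq_nonneg p₂])
  have hd1 : 0 ≤ 1 + (p₃*q₃-p₁*q₁-p₂*q₂) := by
    nlinarith [sq_nonneg (q₁-p₁), sq_nonneg (q₂-p₂), sq_nonneg (p₃+q₃)]
  have hd2 : 1 + (p₃*q₃-p₁*q₁-p₂*q₂) ≤ g^2/2 := by linarith
  have m1 := abs_mul_le _ _ _ a3 e1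
  have m2 := abs_mul_le _ _ _ a1 e3
  have m3 := abs_mul_le _ _ _ a3 e2
  have m4 := abs_mul_le _ _ _ a2 e3
  have m5 := abs_mul_le _ _ _ a2 e1
  have m6 := abs_mul_le _ _ _ a1 e2
  obtain ⟨e1l, e1u⟩ := abs_le.mp e1
  obtain ⟨e2l, e2u⟩ := abs_le.mp e2
  obtain ⟨e3l, e3u⟩ := abs_le.mp e3
  obtain ⟨m1l, m1u⟩ := abs_le.mp m1
  obtain ⟨m2l, m2u⟩ := abs_le.mp m2
  obtain ⟨m3l, m3u⟩ := abs_le.mp m3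
  obtain ⟨m4l, m4u⟩ := abs_le.mp m4
  obtain ⟨m5l, m5u⟩ := abs_le.mp m5
  obtain ⟨m6l, m6u⟩ := abs_le.mp m6
  have hg2 : 0 ≤ g^2 := sq_nonneg g
  rw [Pm_prod]
  intro i j
  fin_cases i <;> fin_cases j <;> simp only [Matrix.smul_apply, Matrix.cons_val', Matrix.cons_val_zero,
    Matrix.cons_val_one, Matrix.head_cons, Matrix.head_fin_const, Matrix.empty_val',
    Matrix.cons_val_fin_one]
  · show ‖(4:ℂ)⁻¹ • (((1 + (p₃*q₃-p₁*q₁-p₂*q₂) + p₃ + q₃ : ℝ) : ℂ) + ((p₂*q₁ - p₁*q₂ : ℝ) : ℂ) * Complex.I)‖ ≤ _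
    refine le_trans (norm_quarter _ _ (g^2/2 + g) (2*g) ?_ ?_) (by linarith)
    · rw [abs_le]; constructor <;> linarith
    · rw [abs_le]; constructor <;> linarith
  · show ‖(4:ℂ)⁻¹ • (((q₁ - p₁ + p₃*q₁ + p₁*q₃ : ℝ) : ℂ) + ((p₂ - q₂ - p₃*q₂ - p₂*q₃ : ℝ) : ℂ) * Complex.I)‖ ≤ _
    refine le_trans (norm_quarter _ _ (3*g) (3*g) ?_ ?_) (by linarith)
    · rw [abs_le]; constructor <;> linarith
    · rw [abs_le]; constructor <;> linarith
  · show ‖(4:ℂ)⁻¹ • (((p₁ - q₁ + p₁*q₃ + p₃*q₁ : ℝ) : ℂ) + ((p₂ + p₂*q₃ - q₂ + p₃*q₂ : ℝ) : ℂ) * Complex.I)‖ ≤ _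
    refine le_trans (norm_quarter _ _ (3*g) (3*g) ?_ ?_) (by linarith)
    · rw [abs_le]; constructor <;> linarith
    · rw [abs_le]; constructor <;> linarith
  · show ‖(4:ℂ)⁻¹ • (((-(1 + (p₃*q₃-p₁*q₁-p₂*q₂)) + p₃ + q₃ : ℝ) : ℂ) + ((p₂*q₁ - p₁*q₂ : ℝ) : ℂ) * Complex.I)‖ ≤ _
    refine le_trans (norm_quarter _ _ (g^2/2 + g) (2*g) ?_ ?_) (by linarith)
    · rw [abs_le]; constructor <;> linarith
    · rw [abs_le]; constructor <;> linarith

lemma unit_coords (ω : E2) (h : ‖ω‖ = 1) : ω 0^2 + ω 1^2 = 1 := by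
  have h2 : ‖ω‖^2 = 1 := by rw [h]; norm_num
  rw [EuclideanSpace.norm_eq, Fin.sum_univ_two, Real.sq_sqrt (by positivity)] at h2
  simpa [Real.norm_eq_abs, sq_abs] using h2

lemma norm_sq_coords (x : E2) : ‖x‖^2 = x 0^2 + x 1^2 := by
  rw [EuclideanSpace.norm_eq, Fin.sum_univ_two, Real.sq_sqrt (by positivity)]
  simp [Real.norm_eq_abs, sq_abs]


set_option maxHeartbeats 1000000 in
lemma d_est (a b A B e T σ : ℝ)
    (ha1 : 1 ≤ a) (hb1 : 1 ≤ b) (hepos : 0 < e)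
    (hae : 1 ≤ 1024*(a*e)) (hbe : 1 ≤ 1024*(b*e))
    (hA2 : A^2 = 1+a^2) (hB2 : B^2 = 1+b^2) (hA0 : 0 ≤ A) (hB0 : 0 ≤ B)
    (hσ : σ ≤ 1) (hT : 2 - 2*(σ*T) ≤ 16*e^2) :
    2 + 2*((σ - a*b*(σ*T))/(A*B)) ≤ (4096*e)^2 := by
  have hapos : (0:ℝ) < a := by linarith
  have hbpos : (0:ℝ) < b := by linarith
  have hAa : a ≤ A := by nlinarith
  have hBb : b ≤ B := by nlinarith
  have hApos : 0 < A := by linarith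
  have hBpos : 0 < B := by linarith
  have hab_pos : (0:ℝ) < a*b := mul_pos hapos hbpos
  have hABsq : (A*B)^2 = (1+a^2)*(1+b^2) := by rw [mul_pow, hA2, hB2]
  have hab_le_AB : a*b ≤ A*B := mul_le_mul hAa hBb (le_of_lt hbpos) hA0
  have hABpos : 0 < A*B := mul_pos hApos hBpos
  have hprod : 2*(A*B - a*b)*(a*b) ≤ 1 + a^2 + b^2 := by
    nlinarith [sq_nonneg (A*B - a*b), hABsq]
  have hA2e : (1:ℝ) ≤ 1048576*(a*e)^2 := by nlinarith [hae, mul_pos hapos hepos]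
  have hB2e : (1:ℝ) ≤ 1048576*(b*e)^2 := by nlinarith [hbe, mul_pos hbpos hepos]
  have habe : (1:ℝ) ≤ 1048576*e^2*(a*b) := by
    nlinarith [mul_le_mul hae hbe zero_le_one (by positivity : (0:ℝ) ≤ 1024*(a*e))]
  have ha2' : (1:ℝ) ≤ a^2 := by nlinarith
  have hb2' : (1:ℝ) ≤ b^2 := by nlinarith
  have u1 : a^2 ≤ 1048576*e^2*(a*b)^2 := by
    nlinarith [mul_le_mul_of_nonneg_left hB2e (sq_nonneg a)]
  have u2 : b^2 ≤ 1048576*e^2*(a*b)^2 := by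
    nlinarith [mul_le_mul_of_nonneg_left hA2e (sq_nonneg b)]
  have u3 : (1:ℝ) ≤ 1048576*e^2*(a*b)^2 := le_trans ha2' u1
  have hsum3 : 1 + a^2 + b^2 ≤ 3145728 * e^2 * (a*b)^2 := by linarith [u1, u2, u3]
  have s1 : 2*(A*B) - 2*(a*b) ≤ 3145728 * e^2 * (a*b) := by
    have hc : (2*(A*B) - 2*(a*b)) * (a*b) ≤ (3145728 * e^2 * (a*b)) * (a*b) := by
      nlinarith [hprod, hsum3]
    exact le_of_mul_le_mul_right hc hab_pos
  have s3 : 2*(a*b) - 2*(a*b)*(σ*T) ≤ 16*e^2*(a*b) := by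
    have h := mul_le_mul_of_nonneg_left hT (le_of_lt hab_pos)
    nlinarith [h]
  have key : 2*(A*B) + 2*σ - 2*(a*b)*(σ*T) ≤ 16777216*e^2*(A*B) := by
    have h5 : e^2*(a*b) ≤ e^2*(A*B) := mul_le_mul_of_nonneg_left hab_le_AB (sq_nonneg e)
    linarith [s1, s3, habe, hσ, h5]
  have heq : 2 + 2*((σ - a*b*(σ*T))/(A*B))
      = (2*(A*B) + 2*σ - 2*(a*b)*(σ*T))/(A*B) := by
    field_simp
    ring
  rw [heq, div_le_iff₀ hABpos]
  nlinarith [key]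

lemma final_est (e N : ℝ) (hepos : 0 < e) (hele : e ≤ 1/2) (hN : 0 ≤ N) :
    4*((4096*e)^2 + 2*(4096*e)) * N ≤ 2^30 * e * N := by
  have hcoef : 4*((4096*e)^2 + 2*(4096*e)) ≤ 2^30 * e := by nlinarith
  exact mul_le_mul_of_nonneg_right hcoef hN

set_option maxHeartbeats 2000000 in
theorem stmt15 :
    ∃ C : ℝ, 0 < C ∧ ∀ (s₁ s₂ : ℝ), (s₁ = 1 ∨ s₁ = -1) → (s₂ = 1 ∨ s₂ = -1) →
      ∀ (k₁ k₂ : ℕ) (l : ℤ), 1 ≤ l → l ≤ (min k₁ k₂ : ℤ) + 10 →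
      ∀ (ω₁ ω₂ : E2), ‖ω₁‖ = 1 → ‖ω₂‖ = 1 →
      ‖s₁ • ω₁ - s₂ • ω₂‖ ≤ (2 : ℝ) ^ (-(l : ℝ) + 2) →
      ∀ (v₁ v₂ : EuclideanSpace ℂ (Fin 2)),
      ‖(inner ℂ (matApp (PiM 1 s₁ ((2 : ℝ) ^ k₁ • ω₁)) v₁)
          (matApp γ0 (matApp (PiM 1 s₂ ((2 : ℝ) ^ k₂ • ω₂)) v₂)) : ℂ)‖ ≤
        C * (2 : ℝ) ^ (-(l : ℝ)) * ‖v₁‖ * ‖v₂‖ := by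
  refine ⟨2^30, by norm_num, ?_⟩
  intro s₁ s₂ hs₁ hs₂ k₁ k₂ l hl1 hl2 ω₁ ω₂ hω₁ hω₂ hsep v₁ v₂
  set e : ℝ := (2:ℝ)^(-(l:ℝ)) with he_def
  have hepos : 0 < e := Real.rpow_pos_of_pos (by norm_num) _
  have hele : e ≤ 1/2 := by
    rw [he_def, show (1/2 : ℝ) = (2:ℝ)^(-(1:ℝ)) by
      rw [show (-(1:ℝ)) = ((-1:ℤ):ℝ) by norm_num, Real.rpow_intCast]; norm_num]
    apply Real.rpow_le_rpow_of_exponent_le (by norm_num)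
    have : (1:ℝ) ≤ (l:ℝ) := by exact_mod_cast hl1
    linarith
  set a : ℝ := (2:ℝ)^k₁ with ha_def
  set b : ℝ := (2:ℝ)^k₂ with hb_def
  have ha1 : (1:ℝ) ≤ a := one_le_pow₀ (by norm_num)
  have hb1 : (1:ℝ) ≤ b := one_le_pow₀ (by norm_num)
  have hapos : (0:ℝ) < a := by linarith
  have hbpos : (0:ℝ) < b := by linarith
  have hkl₁ : (l:ℝ) ≤ (k₁:ℝ) + 10 := by
    have : l ≤ (k₁:ℤ) + 10 := le_trans hl2 (by
      have := min_le_left k₁ k₂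
      omega)
    exact_mod_cast this
  have hkl₂ : (l:ℝ) ≤ (k₂:ℝ) + 10 := by
    have : l ≤ (k₂:ℤ) + 10 := le_trans hl2 (by
      have := min_le_right k₁ k₂
      omega)
    exact_mod_cast this
  have h1024 : (2:ℝ)^(-(10:ℝ)) = 1/1024 := by
    rw [show (-(10:ℝ)) = ((-10:ℤ):ℝ) by norm_num, Real.rpow_intCast]; norm_num
  have hae : (1:ℝ) ≤ 1024*(a*e) := by
    have h1 : a*e = (2:ℝ)^((k₁:ℝ) - (l:ℝ)) := by
      rw [ha_def, he_def, ← Real.rpow_natCast 2 k₁, ← Real.rpow_add (by norm_num : (0:ℝ)<2)]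
      ring_nf
    have h2 : (2:ℝ)^(-(10:ℝ)) ≤ (2:ℝ)^((k₁:ℝ)-(l:ℝ)) :=
      Real.rpow_le_rpow_of_exponent_le (by norm_num) (by linarith)
    rw [h1024] at h2
    rw [h1]; linarith
  have hbe : (1:ℝ) ≤ 1024*(b*e) := by
    have h1 : b*e = (2:ℝ)^((k₂:ℝ) - (l:ℝ)) := by
      rw [hb_def, he_def, ← Real.rpow_natCast 2 k₂, ← Real.rpow_add (by norm_num : (0:ℝ)<2)]
      ring_nf
    have h2 : (2:ℝ)^(-(10:ℝ)) ≤ (2:ℝ)^((k₂:ℝ)-(l:ℝ)) :=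
      Real.rpow_le_rpow_of_exponent_le (by norm_num) (by linarith)
    rw [h1024] at h2
    rw [h1]; linarith
  -- jb facts
  set A : ℝ := jb 1 (a • ω₁) with hA_def
  set B : ℝ := jb 1 (b • ω₂) with hB_def
  have hnorm1 : ‖a • ω₁‖ = a := by
    rw [norm_smul, hω₁, Real.norm_eq_abs, abs_of_pos hapos, mul_one]
  have hnorm2 : ‖b • ω₂‖ = b := by
    rw [norm_smul, hω₂, Real.norm_eq_abs, abs_of_pos hbpos, mul_one]
  have hA2 : A^2 = 1 + a^2 := by
    rw [hA_def, jb, Real.sq_sqrt (by positivity), hnorm1]; ring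
  have hB2 : B^2 = 1 + b^2 := by
    rw [hB_def, jb, Real.sq_sqrt (by positivity), hnorm2]; ring
  have hA0 : 0 ≤ A := Real.sqrt_nonneg _
  have hB0 : 0 ≤ B := Real.sqrt_nonneg _
  have hAa : a ≤ A := by nlinarith
  have hBb : b ≤ B := by nlinarith
  have hApos : 0 < A := by linarith
  have hBpos : 0 < B := by linarith
  have hAne : A ≠ 0 := ne_of_gt hApos
  have hBne : B ≠ 0 := ne_of_gt hBpos
  -- coordinates
  have hco1 : ω₁ 0^2 + ω₁ 1^2 = 1 := unit_coords ω₁ hω₁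
  have hco2 : ω₂ 0^2 + ω₂ 1^2 = 1 := unit_coords ω₂ hω₂
  have hs1sq : s₁^2 = 1 := by rcases hs₁ with h|h <;> rw [h] <;> norm_num
  have hs2sq : s₂^2 = 1 := by rcases hs₂ with h|h <;> rw [h] <;> norm_num
  set p1 : ℝ := s₁ * (a * ω₁ 0) / A with hp1_def
  set p2 : ℝ := s₁ * (a * ω₁ 1) / A with hp2_def
  set p3 : ℝ := s₁ / A with hp3_def
  set q1 : ℝ := s₂ * (b * ω₂ 0) / B with hq1_def
  set q2 : ℝ := s₂ * (b * ω₂ 1) / B with hq2_def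
  set q3 : ℝ := s₂ / B with hq3_def
  have hsm1 : ∀ i, (a • ω₁) i = a * ω₁ i := fun i => by rw [PiLp.smul_apply, smul_eq_mul]
  have hsm2 : ∀ i, (b • ω₂) i = b * ω₂ i := fun i => by rw [PiLp.smul_apply, smul_eq_mul]
  have hPiM1 : PiM 1 s₁ (a • ω₁) = Pm p1 p2 p3 := by
    rw [PiM_eq, hsm1 0, hsm1 1, ← hA_def, ← hp1_def, ← hp2_def, ← hp3_def]
  have hPiM2 : PiM 1 s₂ (b • ω₂) = Pm q1 q2 q3 := by
    rw [PiM_eq, hsm2 0, hsm2 1, ← hB_def, ← hq1_def, ← hq2_def, ← hq3_def]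
  have hp : p1^2 + p2^2 + p3^2 = 1 := by
    rw [hp1_def, hp2_def, hp3_def]
    field_simp
    linear_combination (a^2 * (ω₁ 0^2 + ω₁ 1^2) + 1) * hs1sq + a^2 * hco1 - hA2
  have hq : q1^2 + q2^2 + q3^2 = 1 := by
    rw [hq1_def, hq2_def, hq3_def]
    field_simp
    linear_combination (b^2 * (ω₂ 0^2 + ω₂ 1^2) + 1) * hs2sq + b^2 * hco2 - hB2
  -- separation
  have hsep2 : (s₁*ω₁ 0 - s₂*ω₂ 0)^2 + (s₁*ω₁ 1 - s₂*ω₂ 1)^2 ≤ 16*e^2 := by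
    have h1 : ‖s₁ • ω₁ - s₂ • ω₂‖^2 ≤ ((2:ℝ)^(-(l:ℝ)+2))^2 :=
      pow_le_pow_left₀ (norm_nonneg _) hsep 2
    have h2 : (2:ℝ)^(-(l:ℝ)+2) = e*4 := by
      rw [he_def, Real.rpow_add (by norm_num : (0:ℝ)<2)]
      norm_num [Real.rpow_two]
    have h3 : ‖s₁ • ω₁ - s₂ • ω₂‖^2
        = (s₁*ω₁ 0 - s₂*ω₂ 0)^2 + (s₁*ω₁ 1 - s₂*ω₂ 1)^2 := by
      rw [norm_sq_coords]
      simp [PiLp.sub_apply, PiLp.smul_apply, smul_eq_mul]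
    rw [h3, h2] at h1
    linarith [h1]
  have hT : 2 - 2*(s₁*s₂*(ω₁ 0*ω₂ 0 + ω₁ 1*ω₂ 1)) ≤ 16*e^2 := by
    have hid : (s₁*ω₁ 0 - s₂*ω₂ 0)^2 + (s₁*ω₁ 1 - s₂*ω₂ 1)^2
        = 2 - 2*(s₁*s₂*(ω₁ 0*ω₂ 0 + ω₁ 1*ω₂ 1)) := by
      linear_combination (ω₁ 0^2 + ω₁ 1^2) * hs1sq + (ω₂ 0^2 + ω₂ 1^2) * hs2sq + hco1 + hco2
    linarith [hid ▸ hsep2]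
  -- main smallness estimate
  have hσ : s₁*s₂ ≤ 1 := by rcases hs₁ with h|h <;> rcases hs₂ with h'|h' <;> rw [h,h'] <;> norm_num
  have hdid : p3*q3 - p1*q1 - p2*q2
      = (s₁*s₂ - a*b*(s₁*s₂*(ω₁ 0*ω₂ 0 + ω₁ 1*ω₂ 1)))/(A*B) := by
    rw [hp1_def, hp2_def, hp3_def, hq1_def, hq2_def, hq3_def]
    field_simp
    ring
  have hd : 2 + 2*(p3*q3 - p1*q1 - p2*q2) ≤ (4096*e)^2 := by
    rw [hdid]
    exact d_est a b A B e (ω₁ 0*ω₂ 0 + ω₁ 1*ω₂ 1) (s₁*s₂) ha1 hb1 hepos hae hbe hA2 hB2 hA0 hB0 hσ hT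
  -- assemble
  have hgpos : (0:ℝ) ≤ 4096*e := by positivity
  have hM := entries_bound p1 p2 p3 q1 q2 q3 (4096*e) hp hq hgpos hd
  rw [← matApp_mul, hPiM1, hPiM2, inner_matApp]
  have hbound : ∀ j k, ‖(starRingEnd ℂ) (v₁ j) *
      (((Pm p1 p2 p3)ᴴ * (γ0 * Pm q1 q2 q3)) j k * v₂ k)‖
      ≤ ((4096*e)^2 + 2*(4096*e)) * (‖v₁‖ * ‖v₂‖) := by
    intro j k
    rw [norm_mul, norm_mul, RCLike.norm_conj]
    calc ‖v₁ j‖ * (‖((Pm p1 p2 p3)ᴴ * (γ0 * Pm q1 q2 q3)) j k‖ * ‖v₂ k‖)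
        ≤ ‖v₁‖ * (((4096*e)^2 + 2*(4096*e)) * ‖v₂‖) := by
          apply mul_le_mul (coord_le v₁ j) _ (by positivity) (norm_nonneg _)
          exact mul_le_mul (hM j k) (coord_le v₂ k) (norm_nonneg _) (by positivity)
      _ = ((4096*e)^2 + 2*(4096*e)) * (‖v₁‖ * ‖v₂‖) := by ring
  have hN : (0:ℝ) ≤ ‖v₁‖ * ‖v₂‖ := by positivity
  calc ‖∑ j, ∑ k, (starRingEnd ℂ) (v₁ j) *
        (((Pm p1 p2 p3)ᴴ * (γ0 * Pm q1 q2 q3)) j k * v₂ k)‖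
      ≤ ∑ j, ‖∑ k, (starRingEnd ℂ) (v₁ j) *
        (((Pm p1 p2 p3)ᴴ * (γ0 * Pm q1 q2 q3)) j k * v₂ k)‖ := norm_sum_le _ _
    _ ≤ ∑ j, ∑ k, ‖(starRingEnd ℂ) (v₁ j) *
        (((Pm p1 p2 p3)ᴴ * (γ0 * Pm q1 q2 q3)) j k * v₂ k)‖ :=
        Finset.sum_le_sum (fun _ _ => norm_sum_le _ _)
    _ ≤ ∑ _j : Fin 2, ∑ _k : Fin 2, ((4096*e)^2 + 2*(4096*e)) * (‖v₁‖ * ‖v₂‖) :=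
        Finset.sum_le_sum (fun j _ => Finset.sum_le_sum (fun k _ => hbound j k))
    _ = 4*((4096*e)^2 + 2*(4096*e)) * (‖v₁‖ * ‖v₂‖) := by
        simp [Fin.sum_univ_two]; ring
    _ ≤ 2^30 * e * ‖v₁‖ * ‖v₂‖ := by
        have h := final_est e (‖v₁‖ * ‖v₂‖) hepos hele hN
        linarith [h]
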